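/- arXiv:2204.12764 — 4 statements merged into one kernel-verified Lean document; each statement's English description precedes it below -/
import Mathlib

section
/- Define the parent function ρ*(t) = t − 2^{δ(t)} for t ∈ {1,…,T}, where δ(t) = max{i ≥ 0 : 2^i divides t}. Then for every t ∈ {1,…,T}, the cut of ρ* at t, namely cut_{ρ*}(t) = {s ∈ {1,…,T} : ρ*(s) ≤ t < s}, has cardinality at most ⌊log₂ T⌋ + 1. -/
/-- The multi-scale random walk parent function `ρ*(t) = t − 2^{δ(t)}`, where
`δ(t)` is the 2-adic valuation of `t`. -/
def msParent (t : ℕ) : ℕ := t - 2 ^ (padicValNat 2 t)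

/-- The cut of `ρ*` at any `t ∈ [T]` has cardinality at most `⌊log₂ T⌋ + 1`. -/
theorem msParent_cut_card_le (T : ℕ) (hT : 1 ≤ T) :
    ∀ t ∈ Finset.Icc 1 T,
      ((Finset.Icc 1 T).filter (fun s => msParent s ≤ t ∧ t < s)).card
        ≤ Nat.log 2 T + 1 := by
  intro t ht
  have key : ∀ s ∈ (Finset.Icc 1 T).filter (fun s => msParent s ≤ t ∧ t < s),
      2 ^ padicValNat 2 s ∣ s ∧ t < s ∧ s ≤ t + 2 ^ padicValNat 2 s ∧ s ≤ T := by
    intro s hs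
    rw [Finset.mem_filter, Finset.mem_Icc] at hs
    unfold msParent at hs
    obtain ⟨⟨hs1, hsT⟩, hle, hlt⟩ := hs
    have hdvd : 2 ^ padicValNat 2 s ∣ s := pow_padicValNat_dvd
    exact ⟨hdvd, hlt, by omega, hsT⟩
  have h := Finset.card_le_card_of_injOn (fun s => padicValNat 2 s)
    (s := (Finset.Icc 1 T).filter (fun s => msParent s ≤ t ∧ t < s))
    (t := Finset.range (Nat.log 2 T + 1)) ?_ ?_
  · simpa using h
  · intro s hs
    obtain ⟨hdvd, _, _, hsT⟩ := key s hs
    have hs0 : 0 < s := by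
      obtain ⟨_, h2, _, _⟩ := key s hs; omega
    have hle : 2 ^ padicValNat 2 s ≤ T := le_trans (Nat.le_of_dvd hs0 hdvd) hsT
    rw [Finset.mem_coe, Finset.mem_range, Nat.lt_succ_iff]
    exact (Nat.le_log_iff_pow_le (by norm_num) (by omega)).mpr hle
  · intro a ha b hb hab
    simp only at hab
    obtain ⟨hda, hta, haub, _⟩ := key a ha
    obtain ⟨hdb, htb, hbub, _⟩ := key b hb
    rw [hab] at hda haub
    set k := padicValNat 2 b with hk
    rcases le_total a b with hle | hle
    · have hd : 2 ^ k ∣ b - a := Nat.dvd_sub hdb hda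
      have : b - a < 2 ^ k := by omega
      have := Nat.eq_zero_of_dvd_of_lt hd this
      omega
    · have hd : 2 ^ k ∣ a - b := Nat.dvd_sub hda hdb
      have : a - b < 2 ^ k := by omega
      have := Nat.eq_zero_of_dvd_of_lt hd this
      omega
end

section
/- Consider the 2-armed bandit with composite anonymous feedback where the adversary, depending on a uniform random bit Z ∈ {1,2}, sets at odd rounds t: loss of arm Z equal to 0 and of the other arm equal to 1, fully delayed by one round; and at even rounds t: both arms' losses equal to 𝟙[a_{t−1} = Z], undelayed. Then any deterministic learner observes the fixed sequence 0,1,0,1,… regardless of its actions, and its expected pseudo-regret 𝔼[∑_{t=1}^T l_t(A_t) − min_y ∑_{t=1}^T l_t(A_{t−1}, y)] is at least T/4. -/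
/-- Loss of arm `a` at round `t` in the 2-armed construction with best arm `z`, given that
the learner's action history is `A`: at odd rounds arm `z` has loss `0` and the other arm
loss `1`; at even rounds both arms have loss `𝟙[a_{t−1} = z]`. -/
noncomputable def twoArmLoss (z : Fin 2) (A : ℕ → Fin 2) (t : ℕ) (a : Fin 2) : ℝ :=
  if Odd t then (if a = z then 0 else 1) else (if A (t - 1) = z then 1 else 0)

lemma card_odd_Icc (m : ℕ) :
    ((Finset.Icc 1 (2 * m)).filter (fun t => Odd t)).card = m := by
  induction m with
  | zero => simp
  | succ n ih =>
    have hins : ∀ k : ℕ, Finset.Icc 1 (k + 1) = insert (k + 1) (Finset.Icc 1 k) := by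
      intro k
      ext x
      simp only [Finset.mem_Icc, Finset.mem_insert]
      omega
    have h1 : 2 * (n + 1) = (2 * n + 1) + 1 := by ring
    rw [h1, hins, hins, Finset.filter_insert, Finset.filter_insert]
    have ho : Odd (2 * n + 1) := ⟨n, by ring⟩
    have he : ¬ Odd (2 * n + 1 + 1) := by rw [Nat.odd_iff]; omega
    rw [if_neg he, if_pos ho, Finset.card_insert_of_notMem, ih]
    simp only [Finset.mem_filter, Finset.mem_Icc]
    omega

lemma sum_split (z : Fin 2) (A : ℕ → Fin 2) (T : ℕ) (f : ℕ → Fin 2) :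
    ∑ t ∈ Finset.Icc 1 T, twoArmLoss z A t (f t)
      = (∑ t ∈ (Finset.Icc 1 T).filter (fun t => Odd t),
          (if f t = z then (0:ℝ) else 1))
        + ∑ t ∈ (Finset.Icc 1 T).filter (fun t => ¬ Odd t),
            (if A (t - 1) = z then (1:ℝ) else 0) := by
  rw [← Finset.sum_filter_add_sum_filter_not (Finset.Icc 1 T) (fun t => Odd t)]
  congr 1
  · refine Finset.sum_congr rfl fun t ht => ?_
    simp only [Finset.mem_filter] at ht
    simp [twoArmLoss, ht.2]
  · refine Finset.sum_congr rfl fun t ht => ?_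
    simp only [Finset.mem_filter] at ht
    simp [twoArmLoss, ht.2]

/-- Lower bound for the 2-armed bandit with composite anonymous feedback: for any
deterministic learner (equivalently, any fixed action sequence `A`, since the observed
feedback sequence `0,1,0,1,…` is the same for both values of `Z`), the expected
pseudo-regret, averaged over the uniform random best arm `Z`, is at least `T/4`. -/
theorem two_armed_delayed_lower_bound (T : ℕ) (hT : Even T) (hT1 : 1 ≤ T)
    (A : ℕ → Fin 2) :
    -- the observed feedback (odd rounds: fully delayed, hence 0; even rounds: the delayed
    -- odd loss plus the immediate even loss) is `0,1,0,1,…`, independent of `z`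
    (∀ z : Fin 2, ∀ t ∈ Finset.Icc 1 T,
        (if Odd t then (0 : ℝ)
          else twoArmLoss z A (t - 1) (A (t - 1)) + twoArmLoss z A t (A t))
          = if Odd t then 0 else 1)
    ∧
    -- the expected pseudo-regret is at least `T/4`
    (T / 4 : ℝ) ≤ (1 / 2) * ∑ z : Fin 2,
        ((∑ t ∈ Finset.Icc 1 T, twoArmLoss z A t (A t))
          - min (∑ t ∈ Finset.Icc 1 T, twoArmLoss z A t 0)
                (∑ t ∈ Finset.Icc 1 T, twoArmLoss z A t 1)) := by
  constructor
  · intro z t ht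
    simp only [Finset.mem_Icc] at ht
    by_cases h : Odd t
    · simp [h]
    · have ht1 : Odd (t - 1) := by
        rw [Nat.odd_iff] at h ⊢; omega
      simp only [h, if_false, twoArmLoss, ht1, if_true]
      split_ifs <;> norm_num
  · -- main bound
    set O := (Finset.Icc 1 T).filter (fun t => Odd t) with hO
    set E := (Finset.Icc 1 T).filter (fun t => ¬ Odd t) with hE
    have key : ∀ z : Fin 2,
        ((∑ t ∈ Finset.Icc 1 T, twoArmLoss z A t (A t))
          - min (∑ t ∈ Finset.Icc 1 T, twoArmLoss z A t 0)
                (∑ t ∈ Finset.Icc 1 T, twoArmLoss z A t 1))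
        = ∑ t ∈ O, (if A t = z then (0:ℝ) else 1) := by
      intro z
      have h0 := sum_split z A T (fun _ => 0)
      have h1 := sum_split z A T (fun _ => 1)
      have hp := sum_split z A T A
      set Ez := ∑ t ∈ E, (if A (t - 1) = z then (1:ℝ) else 0) with hEz
      have hmin : min (∑ t ∈ Finset.Icc 1 T, twoArmLoss z A t 0)
                (∑ t ∈ Finset.Icc 1 T, twoArmLoss z A t 1) = Ez := by
        rw [h0, h1]
        have hcnn : (0:ℝ) ≤ O.card := Nat.cast_nonneg _
        fin_cases z
        · norm_num [Finset.sum_const, ← hO]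
        · norm_num [Finset.sum_const, ← hO]
      rw [hp, hmin]; ring
    rw [Fin.sum_univ_two, key 0, key 1, ← Finset.sum_add_distrib]
    have hsum : ∑ t ∈ O, ((if A t = 0 then (0:ℝ) else 1) + (if A t = 1 then (0:ℝ) else 1))
        = O.card := by
      have harm : ∀ a : Fin 2, (if a = 0 then (0:ℝ) else 1) + (if a = 1 then (0:ℝ) else 1) = 1 := by
        intro a; fin_cases a <;> norm_num
      rw [Finset.sum_congr rfl (fun t _ => harm (A t)), Finset.sum_const, nsmul_eq_mul, mul_one]
    rw [hsum]
    have hcard : (O.card : ℝ) = T / 2 := by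
      obtain ⟨m, hm⟩ := hT
      have : T = 2 * m := by omega
      rw [hO, this, card_odd_Icc]
      push_cast
      ring
    rw [hcard]
    ring_nf
    linarith
end

section
/- Let T, τ, d, m be positive integers with τ > max(d, m) and τ dividing T, and suppose a black-box bandit algorithm guarantees expected pseudo-regret at most R(J) over J rounds against any non-oblivious adversary with losses in [0,1]. Then the mini-batch wrapper with batch size τ, run against any m-bounded-memory loss sequence with non-oblivious composite anonymous d-delayed feedback, achieves expected policy regret at most τ·R(T/τ) + (2d + m − 2)·(T/τ) + d − 1. -/
open MeasureTheory Finset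

private lemma Icc_eq_Ioc' (a b : ℕ) : Finset.Icc (a + 1) b = Finset.Ioc a b := by
  ext x; simp only [Finset.mem_Icc, Finset.mem_Ioc]; omega

private lemma sum_Ioc_batches (τ J : ℕ) (F : ℕ → ℝ) :
    ∑ j ∈ Icc 1 J, ∑ t ∈ Ioc ((j - 1) * τ) (j * τ), F t = ∑ t ∈ Ioc 0 (J * τ), F t := by
  induction J with
  | zero => simp
  | succ n ih =>
    rw [Finset.sum_Icc_succ_top (by omega : 1 ≤ n + 1), ih]
    have h1 : (n + 1 - 1) * τ = n * τ := by simp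
    rw [h1]
    exact Finset.sum_Ioc_consecutive F (Nat.zero_le _)
      (Nat.mul_le_mul_right τ (Nat.le_succ n))

private lemma pair_upper (d a n : ℕ) (f : ℕ → ℕ → ℝ) (h0 : ∀ s, f 0 s = 0)
    (hnn : ∀ r s, 0 ≤ f r s) :
    ∑ t ∈ Ioc a (a + n), ∑ s ∈ range d, f (t - s) s
      ≤ ∑ r ∈ Ioc (a + 1 - d) (a + n), ∑ s ∈ range d, f r s := by
  classical
  rw [← Finset.sum_product', ← Finset.sum_product']
  set P := (Ioc a (a + n)) ×ˢ range d with hP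
  set P' := P.filter (fun p : ℕ × ℕ => p.2 < p.1) with hP'
  have e1 : ∑ p ∈ P', f (p.1 - p.2) p.2 = ∑ p ∈ P, f (p.1 - p.2) p.2 := by
    refine Finset.sum_filter_of_ne ?_
    intro p _ hne
    by_contra hlt
    push_neg at hlt
    exact hne (by rw [Nat.sub_eq_zero_of_le hlt, h0])
  have hinj : ∀ x ∈ P', ∀ y ∈ P', (fun p : ℕ × ℕ => (p.1 - p.2, p.2)) x
      = (fun p : ℕ × ℕ => (p.1 - p.2, p.2)) y → x = y := by
    intro x hx y hy hxy
    simp only [hP', Finset.mem_filter] at hx hy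
    simp only [Prod.ext_iff] at hxy ⊢
    omega
  calc ∑ p ∈ P, f (p.1 - p.2) p.2 = ∑ p ∈ P', f (p.1 - p.2) p.2 := e1.symm
    _ = ∑ q ∈ P'.image (fun p : ℕ × ℕ => (p.1 - p.2, p.2)), f q.1 q.2 := by
        rw [Finset.sum_image hinj]
    _ ≤ ∑ q ∈ (Ioc (a + 1 - d) (a + n)) ×ˢ range d, f q.1 q.2 := by
        refine Finset.sum_le_sum_of_subset_of_nonneg ?_ (fun q _ _ => hnn _ _)
        intro q hq
        simp only [Finset.mem_image, hP', Finset.mem_filter, hP, Finset.mem_product,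
          Finset.mem_Ioc, Finset.mem_range] at hq
        obtain ⟨⟨t, s⟩, ⟨⟨⟨ht1, ht2⟩, hs⟩, hst⟩, rfl⟩ := hq
        simp only [Finset.mem_product, Finset.mem_Ioc, Finset.mem_range]
        exact ⟨⟨by omega, by omega⟩, hs⟩

private lemma pair_lower (d N : ℕ) (f : ℕ → ℕ → ℝ) (hnn : ∀ r s, 0 ≤ f r s) :
    ∑ r ∈ Ioc 0 N, ∑ s ∈ range d, f r s
      ≤ (∑ t ∈ Ioc 0 N, ∑ s ∈ range d, f (t - s) s)
        + ∑ r ∈ Ioc (N - (d - 1)) N, ∑ s ∈ range d, f r s := by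
  classical
  rw [← Finset.sum_product', ← Finset.sum_product', ← Finset.sum_product']
  set D := (Ioc 0 N) ×ˢ range d with hD
  rw [← Finset.sum_filter_add_sum_filter_not D (fun p : ℕ × ℕ => p.1 + p.2 ≤ N)]
  have h1 : ∑ p ∈ D.filter (fun p : ℕ × ℕ => p.1 + p.2 ≤ N), f p.1 p.2
      ≤ ∑ t ∈ (Ioc 0 N) ×ˢ range d, f (t.1 - t.2) t.2 := by
    have hinj : ∀ x ∈ D.filter (fun p : ℕ × ℕ => p.1 + p.2 ≤ N),
        ∀ y ∈ D.filter (fun p : ℕ × ℕ => p.1 + p.2 ≤ N),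
        (fun p : ℕ × ℕ => (p.1 + p.2, p.2)) x = (fun p : ℕ × ℕ => (p.1 + p.2, p.2)) y
          → x = y := by
      intro x _ y _ hxy
      simp only [Prod.ext_iff] at hxy ⊢
      omega
    calc ∑ p ∈ D.filter (fun p : ℕ × ℕ => p.1 + p.2 ≤ N), f p.1 p.2
        = ∑ p ∈ D.filter (fun p : ℕ × ℕ => p.1 + p.2 ≤ N), f (p.1 + p.2 - p.2) p.2 := by
          refine Finset.sum_congr rfl fun p _ => ?_
          rw [Nat.add_sub_cancel]
      _ = ∑ q ∈ (D.filter (fun p : ℕ × ℕ => p.1 + p.2 ≤ N)).image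
            (fun p : ℕ × ℕ => (p.1 + p.2, p.2)), f (q.1 - q.2) q.2 := by
          rw [Finset.sum_image hinj]
      _ ≤ ∑ t ∈ (Ioc 0 N) ×ˢ range d, f (t.1 - t.2) t.2 := by
          refine Finset.sum_le_sum_of_subset_of_nonneg ?_ ?_
          · intro q hq
            simp only [Finset.mem_image, Finset.mem_filter, hD, Finset.mem_product,
              Finset.mem_Ioc, Finset.mem_range] at hq
            obtain ⟨⟨r, s⟩, ⟨⟨⟨hr1, hr2⟩, hs⟩, hrs⟩, rfl⟩ := hq
            simp only [Finset.mem_product, Finset.mem_Ioc, Finset.mem_range]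
            exact ⟨⟨by omega, by omega⟩, hs⟩
          · intro q _ _
            exact hnn _ _
  have h2 : ∑ p ∈ D.filter (fun p : ℕ × ℕ => ¬ p.1 + p.2 ≤ N), f p.1 p.2
      ≤ ∑ q ∈ (Ioc (N - (d - 1)) N) ×ˢ range d, f q.1 q.2 := by
    refine Finset.sum_le_sum_of_subset_of_nonneg ?_ (fun q _ _ => hnn _ _)
    intro q hq
    simp only [Finset.mem_filter, hD, Finset.mem_product, Finset.mem_Ioc,
      Finset.mem_range] at hq
    simp only [Finset.mem_product, Finset.mem_Ioc, Finset.mem_range]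
    obtain ⟨⟨⟨h1, h2⟩, h3⟩, h4⟩ := hq
    exact ⟨⟨by omega, h2⟩, h3⟩
  linarith

private lemma clip_lower (τ x c : ℝ) (hτ : 0 < τ) (hx : x ≤ τ + c) (hc : 0 ≤ c) :
    x - c ≤ τ * min ((1 / τ) * x) 1 := by
  rcases le_total ((1 / τ) * x) 1 with h | h
  · rw [min_eq_left h]
    have : τ * ((1 / τ) * x) = x := by field_simp
    rw [this]; linarith
  · rw [min_eq_right h]; linarith

private lemma clip_upper (τ x : ℝ) (hτ : 0 < τ) : τ * min ((1 / τ) * x) 1 ≤ x := by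
  have hx : τ * ((1 / τ) * x) = x := by field_simp
  calc τ * min ((1 / τ) * x) 1 ≤ τ * ((1 / τ) * x) :=
        mul_le_mul_of_nonneg_left (min_le_left _ _) hτ.le
    _ = x := hx

/-- The mini-batch wrapper converts a black-box bandit algorithm with expected
pseudo-regret bound `R(J)` into an algorithm for the composite anonymous `d`-delayed,
`m`-bounded-memory non-oblivious setting, with expected policy regret at most
`τ·R(T/τ) + (2d + m − 2)·(T/τ) + d − 1`.

Here `l t h` is the (non-oblivious) loss at round `t` given the action history `h`,
split into delayed components `lc t s h` (`s < d`); `A t ω` is the action actually played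
at round `t`, constant on each batch and equal to the black box's choice `Z j ω`; the
observed feedback at round `t` is `∑_{s<d} lc (t−s) s` evaluated on the realized history,
and the black box receives the clipped batch averages. -/
theorem minibatch_wrapper_policy_regret
    {𝒜 : Type*} [Fintype 𝒜] [Nonempty 𝒜]
    {Ω : Type*} [MeasurableSpace Ω] (μ : Measure Ω) [IsProbabilityMeasure μ]
    (T τ d m : ℕ) (hd : 1 ≤ d) (hm : 1 ≤ m) (hτ : max d m < τ) (hdvd : τ ∣ T)
    (hT : 1 ≤ T)
    (l : ℕ → (ℕ → 𝒜) → ℝ)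
    (hl01 : ∀ t h, 0 ≤ l t h ∧ l t h ≤ 1)
    (hmem : ∀ t (h h' : ℕ → 𝒜), (∀ s, t - m ≤ s → h s = h' s) → l t h = l t h')
    (lc : ℕ → ℕ → (ℕ → 𝒜) → ℝ)
    (hlc_nonneg : ∀ t s h, 0 ≤ lc t s h)
    (hlc_sum : ∀ t h, 1 ≤ t → ∑ s ∈ Finset.range d, lc t s h = l t h)
    (hlc_zero : ∀ s h, lc 0 s h = 0)
    (A : ℕ → Ω → 𝒜) (Z : ℕ → Ω → 𝒜)
    (hbatch : ∀ j, 1 ≤ j → ∀ t, (j - 1) * τ + 1 ≤ t → t ≤ j * τ → ∀ ω, A t ω = Z j ω)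
    (R : ℕ → ℝ)
    -- the black box's expected pseudo-regret bound, applied to the clipped batch
    -- feedback `hatl j` and its counterfactual value had `y` been played in batch `j`
    (hBB : ∫ ω, Finset.univ.sup' Finset.univ_nonempty (fun y : 𝒜 =>
        ∑ j ∈ Finset.Icc 1 (T / τ),
          (min ((1 / (τ : ℝ)) * ∑ t ∈ Finset.Icc ((j - 1) * τ + 1) (j * τ),
              ∑ s ∈ Finset.range d, lc (t - s) s (fun u => A u ω)) 1
          - min ((1 / (τ : ℝ)) * ∑ t ∈ Finset.Icc ((j - 1) * τ + 1) (j * τ),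
              ∑ s ∈ Finset.range d,
                lc (t - s) s (fun u => if u ≤ (j - 1) * τ then A u ω else y)) 1)) ∂μ
        ≤ R (T / τ))
    (hint₁ : Integrable (fun ω => Finset.univ.sup' Finset.univ_nonempty (fun y : 𝒜 =>
        ∑ j ∈ Finset.Icc 1 (T / τ),
          (min ((1 / (τ : ℝ)) * ∑ t ∈ Finset.Icc ((j - 1) * τ + 1) (j * τ),
              ∑ s ∈ Finset.range d, lc (t - s) s (fun u => A u ω)) 1
          - min ((1 / (τ : ℝ)) * ∑ t ∈ Finset.Icc ((j - 1) * τ + 1) (j * τ),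
              ∑ s ∈ Finset.range d,
                lc (t - s) s (fun u => if u ≤ (j - 1) * τ then A u ω else y)) 1))) μ)
    (hint₂ : Integrable (fun ω => Finset.univ.sup' Finset.univ_nonempty (fun y : 𝒜 =>
        (∑ t ∈ Finset.Icc 1 T, l t (fun u => A u ω))
          - ∑ t ∈ Finset.Icc 1 T, l t (fun _ => y))) μ) :
    -- expected policy regret bound
    ∫ ω, Finset.univ.sup' Finset.univ_nonempty (fun y : 𝒜 =>
        (∑ t ∈ Finset.Icc 1 T, l t (fun u => A u ω))
          - ∑ t ∈ Finset.Icc 1 T, l t (fun _ => y)) ∂μ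
      ≤ τ * R (T / τ) + ((2 * d + m : ℕ) - 2 : ℝ) * ((T / τ : ℕ) : ℝ) + ((d : ℝ) - 1) := by
  classical
  have hτ1 : 1 ≤ τ := by omega
  have hτR : (0 : ℝ) < τ := by exact_mod_cast hτ1
  set J := T / τ with hJdef
  have hTJ : J * τ = T := Nat.div_mul_cancel hdvd
  have hIT : Finset.Icc 1 T = Finset.Ioc 0 (J * τ) := by
    rw [hTJ]; ext x; simp only [Finset.mem_Icc, Finset.mem_Ioc]; omega
  -- helpers
  have sumL_nonneg : ∀ (g : ℕ → 𝒜) (s : Finset ℕ), (0:ℝ) ≤ ∑ r ∈ s, l r g :=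
    fun g s => Finset.sum_nonneg fun r _ => (hl01 r g).1
  have sumL_le : ∀ (g : ℕ → 𝒜) (x y : ℕ), ∑ r ∈ Finset.Ioc x y, l r g ≤ ((y - x : ℕ) : ℝ) := by
    intro g x y
    calc ∑ r ∈ Finset.Ioc x y, l r g ≤ (Finset.Ioc x y).card • (1:ℝ) :=
          Finset.sum_le_card_nsmul _ _ 1 (fun r _ => (hl01 r g).2)
      _ = ((y - x : ℕ) : ℝ) := by rw [Nat.card_Ioc]; simp
  have batchU : ∀ (g : ℕ → 𝒜) (a : ℕ),
      ∑ t ∈ Finset.Ioc a (a + τ), ∑ s ∈ Finset.range d, lc (t - s) s g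
        ≤ ∑ r ∈ Finset.Ioc (a + 1 - d) (a + τ), l r g := by
    intro g a
    refine le_trans (pair_upper d a τ (fun r s => lc r s g) (fun s => hlc_zero s g)
      (fun r s => hlc_nonneg r s g)) ?_
    refine le_of_eq (Finset.sum_congr rfl fun r hr => hlc_sum r g ?_)
    simp only [Finset.mem_Ioc] at hr; omega
  have hbatchIoc : ∀ j : ℕ, 1 ≤ j →
      Finset.Icc ((j - 1) * τ + 1) (j * τ) = Finset.Ioc ((j - 1) * τ) ((j - 1) * τ + τ) := by
    intro j hj
    have hjτ : (j - 1) * τ + τ = j * τ := by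
      have h1 : j - 1 + 1 = j := Nat.sub_add_cancel hj
      calc (j - 1) * τ + τ = (j - 1 + 1) * τ := by ring
        _ = j * τ := by rw [h1]
    rw [Icc_eq_Ioc', hjτ]
  -- main pointwise bound
  have key : ∀ ω : Ω,
      (Finset.univ.sup' Finset.univ_nonempty (fun y : 𝒜 =>
        (∑ t ∈ Finset.Icc 1 T, l t (fun u => A u ω))
          - ∑ t ∈ Finset.Icc 1 T, l t (fun _ => y)))
      ≤ (τ : ℝ) * (Finset.univ.sup' Finset.univ_nonempty (fun y : 𝒜 =>
        ∑ j ∈ Finset.Icc 1 J,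
          (min ((1 / (τ : ℝ)) * ∑ t ∈ Finset.Icc ((j - 1) * τ + 1) (j * τ),
              ∑ s ∈ Finset.range d, lc (t - s) s (fun u => A u ω)) 1
          - min ((1 / (τ : ℝ)) * ∑ t ∈ Finset.Icc ((j - 1) * τ + 1) (j * τ),
              ∑ s ∈ Finset.range d,
                lc (t - s) s (fun u => if u ≤ (j - 1) * τ then A u ω else y)) 1)))
        + ((((2 * d + m : ℕ) : ℝ) - 2) * (J : ℝ) + ((d : ℝ) - 1)) := by
    intro ω
    refine Finset.sup'_le _ _ fun y _ => ?_
    set SUP : ℝ := Finset.univ.sup' Finset.univ_nonempty (fun y : 𝒜 =>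
        ∑ j ∈ Finset.Icc 1 J,
          (min ((1 / (τ : ℝ)) * ∑ t ∈ Finset.Icc ((j - 1) * τ + 1) (j * τ),
              ∑ s ∈ Finset.range d, lc (t - s) s (fun u => A u ω)) 1
          - min ((1 / (τ : ℝ)) * ∑ t ∈ Finset.Icc ((j - 1) * τ + 1) (j * τ),
              ∑ s ∈ Finset.range d,
                lc (t - s) s (fun u => if u ≤ (j - 1) * τ then A u ω else y)) 1)) with hSUP
    have hsup0 : ∑ j ∈ Finset.Icc 1 J,
          (min ((1 / (τ : ℝ)) * ∑ t ∈ Finset.Icc ((j - 1) * τ + 1) (j * τ),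
              ∑ s ∈ Finset.range d, lc (t - s) s (fun u => A u ω)) 1
          - min ((1 / (τ : ℝ)) * ∑ t ∈ Finset.Icc ((j - 1) * τ + 1) (j * τ),
              ∑ s ∈ Finset.range d,
                lc (t - s) s (fun u => if u ≤ (j - 1) * τ then A u ω else y)) 1)
        ≤ SUP := by
      rw [hSUP]
      exact Finset.le_sup' (fun y : 𝒜 =>
        ∑ j ∈ Finset.Icc 1 J,
          (min ((1 / (τ : ℝ)) * ∑ t ∈ Finset.Icc ((j - 1) * τ + 1) (j * τ),
              ∑ s ∈ Finset.range d, lc (t - s) s (fun u => A u ω)) 1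
          - min ((1 / (τ : ℝ)) * ∑ t ∈ Finset.Icc ((j - 1) * τ + 1) (j * τ),
              ∑ s ∈ Finset.range d,
                lc (t - s) s (fun u => if u ≤ (j - 1) * τ then A u ω else y)) 1))
        (Finset.mem_univ y)
    set h : ℕ → 𝒜 := fun u => A u ω with hh
    -- notation for batch sums
    set Sh : ℕ → ℝ := fun j => ∑ t ∈ Finset.Icc ((j - 1) * τ + 1) (j * τ),
        ∑ s ∈ Finset.range d, lc (t - s) s h with hSh
    set Sy : ℕ → ℝ := fun j => ∑ t ∈ Finset.Icc ((j - 1) * τ + 1) (j * τ),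
        ∑ s ∈ Finset.range d, lc (t - s) s
          (fun u => if u ≤ (j - 1) * τ then A u ω else y) with hSy
    -- algorithm side
    have hA : ∑ t ∈ Finset.Icc 1 T, l t h
        ≤ (τ : ℝ) * ∑ j ∈ Finset.Icc 1 J, min ((1 / (τ : ℝ)) * Sh j) 1
          + ((d : ℝ) - 1) * (J : ℝ) + ((d : ℝ) - 1) := by
      have h1 := pair_lower d (J * τ) (fun r s => lc r s h) (fun r s => hlc_nonneg r s h)
      have e1 : ∑ r ∈ Finset.Ioc 0 (J * τ), ∑ s ∈ Finset.range d, lc r s h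
          = ∑ t ∈ Finset.Icc 1 T, l t h := by
        rw [hIT]
        exact Finset.sum_congr rfl fun r hr => hlc_sum r h
          (by simp only [Finset.mem_Ioc] at hr; omega)
      have e2 : ∑ r ∈ Finset.Ioc (J * τ - (d - 1)) (J * τ), ∑ s ∈ Finset.range d, lc r s h
          ≤ (d : ℝ) - 1 := by
        have e2a : ∑ r ∈ Finset.Ioc (J * τ - (d - 1)) (J * τ), ∑ s ∈ Finset.range d, lc r s h
            = ∑ r ∈ Finset.Ioc (J * τ - (d - 1)) (J * τ), l r h :=
          Finset.sum_congr rfl fun r hr => hlc_sum r h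
            (by simp only [Finset.mem_Ioc] at hr; omega)
        rw [e2a]
        refine le_trans (sumL_le h _ _) ?_
        have : (J * τ - (J * τ - (d - 1)) : ℕ) ≤ d - 1 := by omega
        calc ((J * τ - (J * τ - (d - 1)) : ℕ) : ℝ) ≤ ((d - 1 : ℕ) : ℝ) := by exact_mod_cast this
          _ = (d : ℝ) - 1 := by push_cast [hd]; ring
      have e3 : ∑ t ∈ Finset.Ioc 0 (J * τ), ∑ s ∈ Finset.range d, lc (t - s) s h
          = ∑ j ∈ Finset.Icc 1 J, Sh j := by
        rw [← sum_Ioc_batches τ J (fun t => ∑ s ∈ Finset.range d, lc (t - s) s h)]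
        refine Finset.sum_congr rfl fun j hj => ?_
        simp only [Finset.mem_Icc] at hj
        rw [hSh]
        simp only
        rw [hbatchIoc j hj.1]
        have hjτ : (j - 1) * τ + τ = j * τ := by
          have h1 : j - 1 + 1 = j := Nat.sub_add_cancel hj.1
          calc (j - 1) * τ + τ = (j - 1 + 1) * τ := by ring
            _ = j * τ := by rw [h1]
        rw [hjτ]
      have e4 : ∀ j ∈ Finset.Icc 1 J, Sh j ≤ (τ : ℝ) * min ((1 / (τ : ℝ)) * Sh j) 1
          + ((d : ℝ) - 1) := by
        intro j hj
        simp only [Finset.mem_Icc] at hj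
        have hup : Sh j ≤ (τ : ℝ) + ((d : ℝ) - 1) := by
          rw [hSh]; simp only
          rw [hbatchIoc j hj.1]
          refine le_trans (batchU h ((j - 1) * τ)) ?_
          refine le_trans (sumL_le h _ _) ?_
          have : ((j - 1) * τ + τ - ((j - 1) * τ + 1 - d) : ℕ) ≤ τ + (d - 1) := by omega
          calc (((j - 1) * τ + τ - ((j - 1) * τ + 1 - d) : ℕ) : ℝ)
              ≤ ((τ + (d - 1) : ℕ) : ℝ) := by exact_mod_cast this
            _ = (τ : ℝ) + ((d : ℝ) - 1) := by push_cast [hd]; ring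
        have := clip_lower (τ : ℝ) (Sh j) ((d : ℝ) - 1) hτR
          (by linarith) (by simp only [sub_nonneg]; exact_mod_cast hd)
        linarith
      -- combine
      have e5 : ∑ j ∈ Finset.Icc 1 J, Sh j
          ≤ (τ : ℝ) * ∑ j ∈ Finset.Icc 1 J, min ((1 / (τ : ℝ)) * Sh j) 1
            + ((d : ℝ) - 1) * (J : ℝ) := by
        calc ∑ j ∈ Finset.Icc 1 J, Sh j
            ≤ ∑ j ∈ Finset.Icc 1 J, ((τ : ℝ) * min ((1 / (τ : ℝ)) * Sh j) 1 + ((d : ℝ) - 1)) :=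
              Finset.sum_le_sum e4
          _ = (τ : ℝ) * ∑ j ∈ Finset.Icc 1 J, min ((1 / (τ : ℝ)) * Sh j) 1
              + ((d : ℝ) - 1) * (J : ℝ) := by
              rw [Finset.sum_add_distrib, Finset.sum_const, ← Finset.mul_sum, Nat.card_Icc]
              simp only [Nat.add_sub_cancel, nsmul_eq_mul]
              ring
      rw [← e1]
      calc ∑ r ∈ Finset.Ioc 0 (J * τ), ∑ s ∈ Finset.range d, lc r s h
          ≤ (∑ t ∈ Finset.Ioc 0 (J * τ), ∑ s ∈ Finset.range d, lc (t - s) s h)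
            + ∑ r ∈ Finset.Ioc (J * τ - (d - 1)) (J * τ), ∑ s ∈ Finset.range d, lc r s h := h1
        _ ≤ (∑ j ∈ Finset.Icc 1 J, Sh j) + ((d : ℝ) - 1) := by rw [e3]; linarith
        _ ≤ (τ : ℝ) * ∑ j ∈ Finset.Icc 1 J, min ((1 / (τ : ℝ)) * Sh j) 1
            + ((d : ℝ) - 1) * (J : ℝ) + ((d : ℝ) - 1) := by linarith
    -- comparator side
    have hB : (τ : ℝ) * ∑ j ∈ Finset.Icc 1 J, min ((1 / (τ : ℝ)) * Sy j) 1
        ≤ (∑ t ∈ Finset.Icc 1 T, l t (fun _ => y))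
          + ((m : ℝ) + (d : ℝ) - 1) * (J : ℝ) := by
      have e4 : ∀ j ∈ Finset.Icc 1 J, (τ : ℝ) * min ((1 / (τ : ℝ)) * Sy j) 1
          ≤ (∑ r ∈ Finset.Ioc ((j - 1) * τ) (j * τ), l r (fun _ => y))
            + ((m : ℝ) + (d : ℝ) - 1) := by
        intro j hj
        simp only [Finset.mem_Icc] at hj
        set a := (j - 1) * τ with ha
        have hjτ : a + τ = j * τ := by
          have h1 : j - 1 + 1 = j := Nat.sub_add_cancel hj.1
          calc a + τ = (j - 1 + 1) * τ := by rw [ha]; ring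
            _ = j * τ := by rw [h1]
        set g : ℕ → 𝒜 := fun u => if u ≤ a then A u ω else y with hg
        have step1 : Sy j ≤ ∑ r ∈ Finset.Ioc (a + 1 - d) (a + τ), l r g := by
          rw [hSy]; simp only
          rw [hbatchIoc j hj.1]
          exact batchU g a
        have split : ∑ r ∈ Finset.Ioc (a + 1 - d) (a + τ), l r g
            = (∑ r ∈ Finset.Ioc (a + 1 - d) (a + m), l r g)
              + ∑ r ∈ Finset.Ioc (a + m) (a + τ), l r g := by
          rw [Finset.sum_Ioc_consecutive _ (by omega) (by omega : a + m ≤ a + τ)]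
        have part1 : ∑ r ∈ Finset.Ioc (a + 1 - d) (a + m), l r g ≤ (m : ℝ) + (d : ℝ) - 1 := by
          refine le_trans (sumL_le g _ _) ?_
          have : (a + m - (a + 1 - d) : ℕ) ≤ m + d - 1 := by omega
          calc ((a + m - (a + 1 - d) : ℕ) : ℝ) ≤ ((m + d - 1 : ℕ) : ℝ) := by exact_mod_cast this
            _ = (m : ℝ) + (d : ℝ) - 1 := by push_cast [show 1 ≤ m + d by omega]; ring
        have part2 : ∑ r ∈ Finset.Ioc (a + m) (a + τ), l r g
            ≤ ∑ r ∈ Finset.Ioc a (a + τ), l r (fun _ => y) := by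
          have e : ∀ r ∈ Finset.Ioc (a + m) (a + τ), l r g = l r (fun _ => y) := by
            intro r hr
            simp only [Finset.mem_Ioc] at hr
            refine hmem r g (fun _ => y) fun s hs => ?_
            rw [hg]
            simp only
            rw [if_neg (by omega)]
          rw [Finset.sum_congr rfl e]
          refine Finset.sum_le_sum_of_subset_of_nonneg ?_ (fun r _ _ => (hl01 r _).1)
          intro r hr
          simp only [Finset.mem_Ioc] at hr ⊢
          omega
        have clip := clip_upper (τ : ℝ) (Sy j) hτR
        rw [← hjτ]
        linarith
      calc (τ : ℝ) * ∑ j ∈ Finset.Icc 1 J, min ((1 / (τ : ℝ)) * Sy j) 1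
          = ∑ j ∈ Finset.Icc 1 J, (τ : ℝ) * min ((1 / (τ : ℝ)) * Sy j) 1 := Finset.mul_sum _ _ _
        _ ≤ ∑ j ∈ Finset.Icc 1 J, ((∑ r ∈ Finset.Ioc ((j - 1) * τ) (j * τ), l r (fun _ => y))
              + ((m : ℝ) + (d : ℝ) - 1)) := Finset.sum_le_sum e4
        _ = (∑ t ∈ Finset.Icc 1 T, l t (fun _ => y)) + ((m : ℝ) + (d : ℝ) - 1) * (J : ℝ) := by
            rw [Finset.sum_add_distrib, Finset.sum_const, Nat.card_Icc,
              sum_Ioc_batches τ J (fun t => l t (fun _ => y)), hIT]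
            simp only [Nat.add_sub_cancel, nsmul_eq_mul]
            ring
    -- put together
    have hdiff : ∑ j ∈ Finset.Icc 1 J,
          (min ((1 / (τ : ℝ)) * Sh j) 1 - min ((1 / (τ : ℝ)) * Sy j) 1)
        = (∑ j ∈ Finset.Icc 1 J, min ((1 / (τ : ℝ)) * Sh j) 1)
          - ∑ j ∈ Finset.Icc 1 J, min ((1 / (τ : ℝ)) * Sy j) 1 :=
      Finset.sum_sub_distrib _ _
    have hmono : (τ : ℝ) * ∑ j ∈ Finset.Icc 1 J,
          (min ((1 / (τ : ℝ)) * Sh j) 1 - min ((1 / (τ : ℝ)) * Sy j) 1)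
        ≤ (τ : ℝ) * SUP :=
      mul_le_mul_of_nonneg_left hsup0 hτR.le
    have hτdiff : (τ : ℝ) * ∑ j ∈ Finset.Icc 1 J,
          (min ((1 / (τ : ℝ)) * Sh j) 1 - min ((1 / (τ : ℝ)) * Sy j) 1)
        = (τ : ℝ) * (∑ j ∈ Finset.Icc 1 J, min ((1 / (τ : ℝ)) * Sh j) 1)
          - (τ : ℝ) * ∑ j ∈ Finset.Icc 1 J, min ((1 / (τ : ℝ)) * Sy j) 1 := by
      rw [hdiff]; ring
    have hcast : (((2 * d + m : ℕ) : ℝ) - 2) = 2 * (d : ℝ) + (m : ℝ) - 2 := by push_cast; ring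
    rw [hcast]
    linarith
  -- integrate
  set C : ℝ := (((2 * d + m : ℕ) : ℝ) - 2) * (J : ℝ) + ((d : ℝ) - 1) with hCdef
  have hRHSint : Integrable (fun ω => (τ : ℝ) * (Finset.univ.sup' Finset.univ_nonempty
      (fun y : 𝒜 => ∑ j ∈ Finset.Icc 1 J,
        (min ((1 / (τ : ℝ)) * ∑ t ∈ Finset.Icc ((j - 1) * τ + 1) (j * τ),
            ∑ s ∈ Finset.range d, lc (t - s) s (fun u => A u ω)) 1
        - min ((1 / (τ : ℝ)) * ∑ t ∈ Finset.Icc ((j - 1) * τ + 1) (j * τ),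
            ∑ s ∈ Finset.range d,
              lc (t - s) s (fun u => if u ≤ (j - 1) * τ then A u ω else y)) 1)))
      + C) μ :=
    (hint₁.const_mul _).add (integrable_const _)
  have hle : ∫ ω, Finset.univ.sup' Finset.univ_nonempty (fun y : 𝒜 =>
        (∑ t ∈ Finset.Icc 1 T, l t (fun u => A u ω))
          - ∑ t ∈ Finset.Icc 1 T, l t (fun _ => y)) ∂μ
      ≤ ∫ ω, ((τ : ℝ) * (Finset.univ.sup' Finset.univ_nonempty
          (fun y : 𝒜 => ∑ j ∈ Finset.Icc 1 J,
            (min ((1 / (τ : ℝ)) * ∑ t ∈ Finset.Icc ((j - 1) * τ + 1) (j * τ),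
                ∑ s ∈ Finset.range d, lc (t - s) s (fun u => A u ω)) 1
            - min ((1 / (τ : ℝ)) * ∑ t ∈ Finset.Icc ((j - 1) * τ + 1) (j * τ),
                ∑ s ∈ Finset.range d,
                  lc (t - s) s (fun u => if u ≤ (j - 1) * τ then A u ω else y)) 1)))
          + C) ∂μ :=
    integral_mono hint₂ hRHSint key
  have heq : ∫ ω, ((τ : ℝ) * (Finset.univ.sup' Finset.univ_nonempty
          (fun y : 𝒜 => ∑ j ∈ Finset.Icc 1 J,
            (min ((1 / (τ : ℝ)) * ∑ t ∈ Finset.Icc ((j - 1) * τ + 1) (j * τ),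
                ∑ s ∈ Finset.range d, lc (t - s) s (fun u => A u ω)) 1
            - min ((1 / (τ : ℝ)) * ∑ t ∈ Finset.Icc ((j - 1) * τ + 1) (j * τ),
                ∑ s ∈ Finset.range d,
                  lc (t - s) s (fun u => if u ≤ (j - 1) * τ then A u ω else y)) 1)))
          + C) ∂μ
      = (τ : ℝ) * (∫ ω, Finset.univ.sup' Finset.univ_nonempty
          (fun y : 𝒜 => ∑ j ∈ Finset.Icc 1 J,
            (min ((1 / (τ : ℝ)) * ∑ t ∈ Finset.Icc ((j - 1) * τ + 1) (j * τ),
                ∑ s ∈ Finset.range d, lc (t - s) s (fun u => A u ω)) 1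
            - min ((1 / (τ : ℝ)) * ∑ t ∈ Finset.Icc ((j - 1) * τ + 1) (j * τ),
                ∑ s ∈ Finset.range d,
                  lc (t - s) s (fun u => if u ≤ (j - 1) * τ then A u ω else y)) 1)) ∂μ)
          + C := by
    rw [integral_add (hint₁.const_mul _) (integrable_const _), integral_const_mul,
      integral_const]
    simp [measure_univ]
  rw [heq] at hle
  have hfin := mul_le_mul_of_nonneg_left hBB hτR.le
  rw [hCdef] at hle
  linarith
end

section
/- Let ℙ⁰ and ℙⁱ be the laws of the observed-loss sequence for a fixed deterministic learner under hypotheses Z=0 and Z=i respectively in the lower-bound construction, and suppose the per-round conditional KL divergence satisfies D_KL(ℙ⁰_t ‖ ℙⁱ_t) ≤ (ε²/2σ²)·𝟙[S_t^i ≠ S_{ρ*(t)}^i] where the total number of state switches ∑_t 𝟙[S_{t−1}^i ≠ S_t^i] is at most 8ε·T_i/(1−8ε), and ρ* has width ω(ρ*). Then D_TV(ℙ⁰, ℙⁱ) ≤ (ε/σ)·√(2·ω(ρ*)·ε·𝔼_{ℙ⁰}[T_i]/(1−8ε)). -/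
open MeasureTheory

private lemma ind_nonneg' (p : Prop) [Decidable p] : (0:ℝ) ≤ if p then 1 else 0 := by
  split <;> norm_num

private lemma aux_chain (f : ℕ → Bool) (a : ℕ) : ∀ b, a ≤ b →
    ((if f b ≠ f a then (1:ℝ) else 0) ≤
      ∑ s ∈ Finset.Icc (a+1) b, if f (s-1) ≠ f s then 1 else 0) := by
  intro b hb
  induction b, hb using Nat.le_induction with
  | base => simp
  | succ b hb ih =>
    rw [Finset.sum_Icc_succ_top (by omega)]
    simp only [Nat.add_sub_cancel]
    have hnn : (0:ℝ) ≤ ∑ s ∈ Finset.Icc (a+1) b, if f (s-1) ≠ f s then (1:ℝ) else 0 :=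
      Finset.sum_nonneg (fun s _ => ind_nonneg' _)
    by_cases hba : f (b+1) = f a
    · have h1 : (if f (b+1) ≠ f a then (1:ℝ) else 0) = 0 := by simp [hba]
      have h2 : (0:ℝ) ≤ if f b ≠ f (b+1) then (1:ℝ) else 0 := ind_nonneg' _
      linarith [h1.le, h1.ge]
    · by_cases hb1 : f (b+1) = f b
      · have hne : f b ≠ f a := by rw [← hb1]; exact hba
        have h2 : (0:ℝ) ≤ if f b ≠ f (b+1) then (1:ℝ) else 0 := ind_nonneg' _
        have hih := ih
        rw [if_pos hne] at hih
        rw [if_pos hba]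
        linarith
      · have h2 : (if f b ≠ f (b+1) then (1:ℝ) else 0) = 1 := by
          simp [Ne.symm hb1]
        rw [if_pos hba, h2]
        linarith

/-- From the per-round conditional KL bound `D_KL(ℙ⁰_t‖ℙⁱ_t) ≤ (ε²/2σ²)·𝟙[S_t ≠ S_{ρ*(t)}]`,
the switch-count bound `∑_t 𝟙[S_{t−1} ≠ S_t] ≤ 8εT_i/(1−8ε)`, the width bound for the
parent function `ρ*`, the chain rule for KL, and Pinsker's inequality, conclude
`D_TV(ℙ⁰, ℙⁱ) ≤ (ε/σ)·√(2·ω·ε·𝔼_{ℙ⁰}[T_i]/(1−8ε))`.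

Here `μ` is the law of everything under `Z = 0`, `Dt t ω` is the conditional KL divergence
at round `t` given the observation history, `S t ω` the delay adversary's state under
`Z = i`, and `Ti ω` the number of plays of arm `i`. -/
theorem kl_chain_tv_bound {Ω : Type*} [MeasurableSpace Ω] (μ : Measure Ω)
    [IsProbabilityMeasure μ] (T : ℕ) (ε σ ω : ℝ) (hε0 : 0 < ε) (hε : ε < 1 / 8)
    (hσ : 0 < σ) (hω : 0 ≤ ω)
    (ρ : ℕ → ℕ) (hρ : ∀ t ∈ Finset.Icc 1 T, ρ t < t)
    (hwidth : ∀ t ∈ Finset.Icc 0 T,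
      (((Finset.Icc 1 T).filter (fun s => ρ s ≤ t ∧ t < s)).card : ℝ) ≤ ω)
    (S : ℕ → Ω → Bool) (Ti : Ω → ℝ) (hTi : ∀ x, 0 ≤ Ti x)
    (hTi_int : Integrable Ti μ)
    (Dt : ℕ → Ω → ℝ) (hDt_int : ∀ t, Integrable (Dt t) μ)
    (hDt : ∀ t ∈ Finset.Icc 1 T, ∀ x,
      Dt t x ≤ ε ^ 2 / (2 * σ ^ 2) * (if S t x ≠ S (ρ t) x then 1 else 0))
    (hswitch : ∀ x,
      (∑ t ∈ Finset.Icc 1 T, if S (t - 1) x ≠ S t x then (1 : ℝ) else 0)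
        ≤ 8 * ε * Ti x / (1 - 8 * ε))
    (kl tv : ℝ)
    -- chain rule for the KL divergence between the observation laws
    (hchain : kl = ∑ t ∈ Finset.Icc 1 T, ∫ x, Dt t x ∂μ)
    -- Pinsker's inequality
    (hpinsker : tv ≤ Real.sqrt (kl / 2)) :
    tv ≤ (ε / σ) * Real.sqrt (2 * ω * ε * (∫ x, Ti x ∂μ) / (1 - 8 * ε)) := by
  have h8 : (0:ℝ) < 1 - 8 * ε := by linarith
  have hI : (0:ℝ) ≤ ∫ x, Ti x ∂μ := integral_nonneg hTi
  set I := ∫ x, Ti x ∂μ with hIdef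
  set c : ℝ := ε ^ 2 / (2 * σ ^ 2) with hcdef
  have hc : 0 ≤ c := by positivity
  set C : ℝ := c * ω * 8 * ε / (1 - 8 * ε) with hCdef
  -- pointwise bound on the sum of indicators
  have hpt : ∀ x, (∑ t ∈ Finset.Icc 1 T, (if S t x ≠ S (ρ t) x then (1:ℝ) else 0))
      ≤ ω * (8 * ε * Ti x / (1 - 8 * ε)) := by
    intro x
    have step1 : (∑ t ∈ Finset.Icc 1 T, (if S t x ≠ S (ρ t) x then (1:ℝ) else 0))
        ≤ ∑ t ∈ Finset.Icc 1 T, ∑ s ∈ Finset.Icc (ρ t + 1) t,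
            (if S (s-1) x ≠ S s x then (1:ℝ) else 0) := by
      apply Finset.sum_le_sum
      intro t ht
      exact aux_chain (fun n => S n x) (ρ t) t (le_of_lt (hρ t ht))
    have step2 : (∑ t ∈ Finset.Icc 1 T, ∑ s ∈ Finset.Icc (ρ t + 1) t,
            (if S (s-1) x ≠ S s x then (1:ℝ) else 0))
        = ∑ s ∈ Finset.Icc 1 T,
            (((Finset.Icc 1 T).filter (fun t => ρ t < s ∧ s ≤ t)).card : ℝ)
              * (if S (s-1) x ≠ S s x then (1:ℝ) else 0) := by
      calc (∑ t ∈ Finset.Icc 1 T, ∑ s ∈ Finset.Icc (ρ t + 1) t,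
            (if S (s-1) x ≠ S s x then (1:ℝ) else 0))
          = ∑ t ∈ Finset.Icc 1 T, ∑ s ∈ Finset.Icc 1 T,
              (if ρ t < s ∧ s ≤ t then (if S (s-1) x ≠ S s x then (1:ℝ) else 0) else 0) := by
            apply Finset.sum_congr rfl
            intro t ht
            simp only [Finset.mem_Icc] at ht
            have hset : Finset.Icc (ρ t + 1) t
                = (Finset.Icc 1 T).filter (fun s => ρ t < s ∧ s ≤ t) := by
              ext s
              simp only [Finset.mem_Icc, Finset.mem_filter]
              omega
            rw [hset, Finset.sum_filter]
        _ = ∑ s ∈ Finset.Icc 1 T, ∑ t ∈ Finset.Icc 1 T,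
              (if ρ t < s ∧ s ≤ t then (if S (s-1) x ≠ S s x then (1:ℝ) else 0) else 0) :=
            Finset.sum_comm
        _ = _ := by
            apply Finset.sum_congr rfl
            intro s _
            rw [← Finset.sum_filter, Finset.sum_const, nsmul_eq_mul]
    have step3 : (∑ s ∈ Finset.Icc 1 T,
            (((Finset.Icc 1 T).filter (fun t => ρ t < s ∧ s ≤ t)).card : ℝ)
              * (if S (s-1) x ≠ S s x then (1:ℝ) else 0))
        ≤ ω * ∑ s ∈ Finset.Icc 1 T, (if S (s-1) x ≠ S s x then (1:ℝ) else 0) := by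
      rw [Finset.mul_sum]
      apply Finset.sum_le_sum
      intro s hs
      simp only [Finset.mem_Icc] at hs
      have hcard : (((Finset.Icc 1 T).filter (fun t => ρ t < s ∧ s ≤ t)).card : ℝ) ≤ ω := by
        have hset : (Finset.Icc 1 T).filter (fun t => ρ t < s ∧ s ≤ t)
            = (Finset.Icc 1 T).filter (fun t => ρ t ≤ s - 1 ∧ s - 1 < t) := by
          apply Finset.filter_congr
          intro t ht
          simp only [Finset.mem_Icc] at ht
          omega
        rw [hset]
        exact hwidth (s - 1) (by simp only [Finset.mem_Icc]; omega)
      exact mul_le_mul_of_nonneg_right hcard (ind_nonneg' _)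
    have step4 : ω * (∑ s ∈ Finset.Icc 1 T, (if S (s-1) x ≠ S s x then (1:ℝ) else 0))
        ≤ ω * (8 * ε * Ti x / (1 - 8 * ε)) :=
      mul_le_mul_of_nonneg_left (hswitch x) hω
    linarith
  -- integral bound
  have hsum_int : Integrable (fun x => ∑ t ∈ Finset.Icc 1 T, Dt t x) μ :=
    integrable_finset_sum _ (fun t _ => hDt_int t)
  have hklC : kl ≤ C * I := by
    rw [hchain, ← integral_finset_sum _ (fun t _ => hDt_int t)]
    have hmono : (∫ x, ∑ t ∈ Finset.Icc 1 T, Dt t x ∂μ) ≤ ∫ x, C * Ti x ∂μ := by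
      apply integral_mono hsum_int (hTi_int.const_mul C)
      intro x
      have h1 : (∑ t ∈ Finset.Icc 1 T, Dt t x)
          ≤ ∑ t ∈ Finset.Icc 1 T, c * (if S t x ≠ S (ρ t) x then (1:ℝ) else 0) :=
        Finset.sum_le_sum (fun t ht => hDt t ht x)
      rw [← Finset.mul_sum] at h1
      have h2 := mul_le_mul_of_nonneg_left (hpt x) hc
      have h3 : c * (ω * (8 * ε * Ti x / (1 - 8 * ε))) = C * Ti x := by
        rw [hCdef]; ring
      calc (∑ t ∈ Finset.Icc 1 T, Dt t x) ≤ _ := h1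
        _ ≤ c * (ω * (8 * ε * Ti x / (1 - 8 * ε))) := h2
        _ = C * Ti x := h3
    rw [integral_const_mul] at hmono
    exact hmono
  -- conclude via Pinsker
  have hhalf : kl / 2 ≤ (ε / σ) ^ 2 * (2 * ω * ε * I / (1 - 8 * ε)) := by
    have : C * I / 2 = (ε / σ) ^ 2 * (2 * ω * ε * I / (1 - 8 * ε)) := by
      rw [hCdef, hcdef]; ring
    linarith
  calc tv ≤ Real.sqrt (kl / 2) := hpinsker
    _ ≤ Real.sqrt ((ε / σ) ^ 2 * (2 * ω * ε * I / (1 - 8 * ε))) := Real.sqrt_le_sqrt hhalf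
    _ = (ε / σ) * Real.sqrt (2 * ω * ε * I / (1 - 8 * ε)) := by
        rw [Real.sqrt_mul (sq_nonneg _), Real.sqrt_sq (le_of_lt (div_pos hε0 hσ))]
end
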